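/- arXiv:1806.03734 — 2 statements merged into one kernel-verified Lean document; each statement's English description precedes it below -/
import Mathlib

section
/- Let W be a standard Brownian motion on a probability space (Ω,F,P) and let α > 0, β > 0. Then the probability that the process W_t − βt exceeds α in finite time is exactly e^{−2αβ}; that is, P({ω : ∃ t ≥ 0, W_t(ω) − βt > α}) = e^{−2αβ}. -/
set_option linter.unusedSectionVars false
set_option linter.unusedVariables false
set_option maxHeartbeats 1000000

open scoped ENNReal NNReal
open MeasureTheory

noncomputable section

/-- `W` is a standard Brownian motion on `(Ω, F, P)`: it starts at `0`, has almost surely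
continuous sample paths, independent increments, and Gaussian increments
`W_t − W_u ∼ N(0, t − u)` for `0 ≤ u ≤ t`. -/
structure IsStdBM {Ω : Type*} [MeasurableSpace Ω] (P : Measure Ω) (W : ℝ → Ω → ℝ) : Prop where
  meas : ∀ t, Measurable (W t)
  init : ∀ ω, W 0 ω = 0
  cont : ∀ᵐ ω ∂P, ContinuousOn (fun t => W t ω) (Set.Ici 0)
  indep : ∀ (n : ℕ) (t : Fin (n + 1) → ℝ), (∀ i, 0 ≤ t i) → Monotone t →
    ProbabilityTheory.iIndepFun
      (fun i : Fin n => fun ω => W (t i.succ) ω - W (t i.castSucc) ω) P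
  gauss : ∀ u t : ℝ, 0 ≤ u → u ≤ t →
    Measure.map (fun ω => W t ω - W u ω) P =
      ProbabilityTheory.gaussianReal 0 (Real.toNNReal (t - u))

section BMAux

open Real ProbabilityTheory Filter

variable {Ω : Type*} [MeasurableSpace Ω] {P : Measure Ω} {W : ℝ → Ω → ℝ}

lemma indep_mono {m1 m2 m1' m2' : MeasurableSpace Ω} (h : Indep m1 m2 P)
    (h1 : m1' ≤ m1) (h2 : m2' ≤ m2) : Indep m1' m2' P := by
  rw [Indep_iff] at h ⊢
  exact fun s t hs ht => h s t (h1 _ hs) (h2 _ ht)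

lemma gaussianPDFReal_tilt (v : ℝ≥0) (hv : v ≠ 0) (s x : ℝ) :
    Real.exp (s * x) * gaussianPDFReal 0 v x
      = Real.exp (s ^ 2 * v / 2) * gaussianPDFReal (s * v) v x := by
  have hv' : (0:ℝ) < v := by exact_mod_cast pos_iff_ne_zero.2 hv
  simp only [gaussianPDFReal]
  rw [mul_left_comm, mul_left_comm (Real.exp (s ^ 2 * v / 2))]
  congr 1
  rw [← Real.exp_add, ← Real.exp_add]
  congr 1
  field_simp
  ring

lemma lintegral_exp_gaussian (v : ℝ≥0) (s : ℝ) :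
    ∫⁻ x, ENNReal.ofReal (Real.exp (s * x)) ∂(gaussianReal 0 v)
      = ENNReal.ofReal (Real.exp (s ^ 2 * v / 2)) := by
  rcases eq_or_ne v 0 with rfl | hv
  · simp [gaussianReal_zero_var, lintegral_dirac]
  · rw [gaussianReal_of_var_ne_zero _ hv,
      lintegral_withDensity_eq_lintegral_mul _ (measurable_gaussianPDF _ _)
        (by fun_prop)]
    have : ∀ x, (gaussianPDF 0 v * fun x => ENNReal.ofReal (Real.exp (s * x))) x
        = ENNReal.ofReal (Real.exp (s ^ 2 * v / 2)) * gaussianPDF (s * v) v x := by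
      intro x
      simp only [Pi.mul_apply, gaussianPDF]
      rw [← ENNReal.ofReal_mul (gaussianPDFReal_nonneg _ _ _),
        ← ENNReal.ofReal_mul (Real.exp_nonneg _)]
      rw [mul_comm (gaussianPDFReal 0 v x), gaussianPDFReal_tilt v hv]
    simp_rw [this]
    rw [lintegral_const_mul _ (measurable_gaussianPDF _ _), lintegral_gaussianPDF_eq_one _ hv,
      mul_one]

lemma lintegral_exp_map {Y : Ω → ℝ} (hY : Measurable Y) {v : ℝ≥0}
    (hmap : Measure.map Y P = gaussianReal 0 v) (s : ℝ) :
    ∫⁻ ω, ENNReal.ofReal (Real.exp (s * Y ω)) ∂P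
      = ENNReal.ofReal (Real.exp (s ^ 2 * v / 2)) := by
  have := lintegral_map (f := fun x => ENNReal.ofReal (Real.exp (s * x))) (by fun_prop) hY
    (μ := P)
  rw [hmap] at this
  rw [← this, lintegral_exp_gaussian]

lemma gauss_tail {Y : Ω → ℝ} (hY : Measurable Y) {v : ℝ≥0}
    (hmap : Measure.map Y P = gaussianReal 0 v) {a s : ℝ} (hs : 0 ≤ s) :
    P {ω | a < Y ω} ≤ ENNReal.ofReal (Real.exp (s ^ 2 * v / 2 - s * a)) := by
  have hmeas : MeasurableSet {ω | a < Y ω} := measurableSet_lt measurable_const hY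
  calc P {ω | a < Y ω} = ∫⁻ _ in {ω | a < Y ω}, 1 ∂P := (setLIntegral_one _).symm
    _ ≤ ∫⁻ ω in {ω | a < Y ω},
          ENNReal.ofReal (Real.exp (-(s*a))) * ENNReal.ofReal (Real.exp (s * Y ω)) ∂P := by
        refine setLIntegral_mono (by fun_prop) fun ω h => ?_
        rw [← ENNReal.ofReal_mul (Real.exp_nonneg _), ← Real.exp_add]
        refine ENNReal.one_le_ofReal.2 (Real.one_le_exp ?_)
        have : a < Y ω := h
        nlinarith
    _ ≤ ∫⁻ ω, ENNReal.ofReal (Real.exp (-(s*a))) * ENNReal.ofReal (Real.exp (s * Y ω)) ∂P :=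
        setLIntegral_le_lintegral _ _
    _ = ENNReal.ofReal (Real.exp (s ^ 2 * v / 2 - s * a)) := by
        rw [lintegral_const_mul _ (by fun_prop), lintegral_exp_map hY hmap,
          ← ENNReal.ofReal_mul (Real.exp_nonneg _), ← Real.exp_add]
        ring_nf

lemma gauss_trunc {Y : Ω → ℝ} (hY : Measurable Y) {v : ℝ≥0}
    (hmap : Measure.map Y P = gaussianReal 0 v) {ε s c : ℝ} (hc : 0 ≤ c) :
    ∫⁻ ω, (if ε < Y ω then ENNReal.ofReal (Real.exp (s * Y ω)) else 0) ∂P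
      ≤ ENNReal.ofReal (Real.exp ((s + c) ^ 2 * v / 2 - c * ε)) := by
  calc ∫⁻ ω, (if ε < Y ω then ENNReal.ofReal (Real.exp (s * Y ω)) else 0) ∂P
      ≤ ∫⁻ ω, ENNReal.ofReal (Real.exp (-(c*ε))) * ENNReal.ofReal (Real.exp ((s+c) * Y ω)) ∂P := by
        refine lintegral_mono fun ω => ?_
        rw [← ENNReal.ofReal_mul (Real.exp_nonneg _), ← Real.exp_add]
        by_cases h : ε < Y ω
        · rw [if_pos h]
          refine ENNReal.ofReal_le_ofReal (Real.exp_le_exp.2 ?_)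
          nlinarith
        · rw [if_neg h]; exact zero_le
    _ ≤ ENNReal.ofReal (Real.exp ((s + c) ^ 2 * v / 2 - c * ε)) := by
        rw [lintegral_const_mul _ (by fun_prop), lintegral_exp_map hY hmap,
          ← ENNReal.ofReal_mul (Real.exp_nonneg _), ← Real.exp_add]
        ring_nf
        exact le_rfl

open scoped Classical in
noncomputable def Zp (W : ℝ → Ω → ℝ) (β α : ℝ) (u : ℕ → ℝ) : ℕ → Ω → ℝ
  | 0 => fun _ => 0
  | (k+1) => fun ω =>
      if ∀ j ≤ k, W (u j) ω - β * u j ≤ α then W (u (k+1)) ω - β * u (k+1)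
      else Zp W β α u k ω

lemma Zp_succ (β α : ℝ) (u : ℕ → ℝ) (k : ℕ) (ω : Ω) :
    Zp W β α u (k+1) ω = if ∀ j ≤ k, W (u j) ω - β * u j ≤ α
      then W (u (k+1)) ω - β * u (k+1) else Zp W β α u k ω := by
  simp [Zp]

lemma Zp_surv {β α : ℝ} {u : ℕ → ℝ} {ω : Ω} (hX0 : W (u 0) ω - β * u 0 = 0)
    (k : ℕ) (h : ∀ j ≤ k, W (u j) ω - β * u j ≤ α) :
    Zp W β α u k ω = W (u k) ω - β * u k := by
  cases k with
  | zero => exact hX0.symm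
  | succ k =>
    rw [Zp_succ, if_pos fun j hj => h j (hj.trans (Nat.le_succ k))]

lemma Zp_hit {β α : ℝ} (hα : 0 < α) {u : ℕ → ℝ} {ω : Ω}
    (hX0 : W (u 0) ω - β * u 0 = 0) :
    ∀ k, ¬(∀ j ≤ k, W (u j) ω - β * u j ≤ α) →
      α < Zp W β α u k ω ∧ ∃ j, j < k ∧
        Zp W β α u k ω ≤ α + ((W (u (j+1)) ω - β * u (j+1)) - (W (u j) ω - β * u j)) := by
  intro k
  induction k with
  | zero =>
    intro h
    exact absurd (fun j hj => by interval_cases j; rw [hX0]; exact hα.le) h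
  | succ k ih =>
    intro h
    by_cases h' : ∀ j ≤ k, W (u j) ω - β * u j ≤ α
    · rw [Zp_succ, if_pos h']
      push_neg at h
      obtain ⟨j, hj, hgt⟩ := h
      have hjk : j = k + 1 := by
        rcases Nat.lt_succ_iff_lt_or_eq.mp (Nat.lt_succ_of_le hj) with h1 | h1
        · exact absurd (h' j (Nat.lt_succ_iff.mp h1)) (not_le.2 hgt)
        · exact h1
      subst hjk
      refine ⟨hgt, k, Nat.lt_succ_self k, ?_⟩
      have := h' k le_rfl
      linarith
    · rw [Zp_succ, if_neg h']
      obtain ⟨h1, j, hj, h2⟩ := ih h'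
      exact ⟨h1, j, hj.trans (Nat.lt_succ_self k), h2⟩

lemma Zp_meas (hm : ∀ t, Measurable (W t)) (β α : ℝ) (u : ℕ → ℝ) :
    ∀ k, Measurable (Zp W β α u k) := by
  intro k
  induction k with
  | zero => exact measurable_const
  | succ k ih =>
    have hset : MeasurableSet {ω : Ω | ∀ j ≤ k, W (u j) ω - β * u j ≤ α} := by
      rw [Set.setOf_forall]
      refine MeasurableSet.iInter fun j => ?_
      rw [Set.setOf_forall]
      exact MeasurableSet.iInter fun hj =>
        measurableSet_le ((hm _).sub measurable_const) measurable_const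
    have : Zp W β α u (k+1) = fun ω => if ω ∈ {ω : Ω | ∀ j ≤ k, W (u j) ω - β * u j ≤ α}
        then W (u (k+1)) ω - β * u (k+1) else Zp W β α u k ω := by
      funext ω; rw [Zp_succ]; rfl
    rw [this]
    exact Measurable.ite hset ((hm _).sub measurable_const) ih

lemma survSet_meas (hm : ∀ t, Measurable (W t)) (β α : ℝ) (u : ℕ → ℝ) (k : ℕ) :
    MeasurableSet {ω : Ω | ∀ j ≤ k, W (u j) ω - β * u j ≤ α} := by
  rw [Set.setOf_forall]
  refine MeasurableSet.iInter fun j => ?_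
  rw [Set.setOf_forall]
  exact MeasurableSet.iInter fun hj =>
    measurableSet_le ((hm _).sub measurable_const) measurable_const

lemma Zp_lintegral (hW : IsStdBM P W) [IsProbabilityMeasure P] (α β : ℝ)
    {u : ℕ → ℝ} (hu0 : u 0 = 0) (hu : Monotone u) :
    ∀ k, ∫⁻ ω, ENNReal.ofReal (Real.exp (2 * β * Zp W β α u k ω)) ∂P = 1 := by
  intro k
  induction k with
  | zero => simp [Zp]
  | succ k ih =>
    have hSm : MeasurableSet {ω : Ω | ∀ j ≤ k, W (u j) ω - β * u j ≤ α} :=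
      survSet_meas hW.meas β α u k
    have hX0 : ∀ ω : Ω, W (u 0) ω - β * u 0 = 0 := fun ω => by
      rw [hu0, hW.init ω]; ring
    have hd0 : (0:ℝ) ≤ u (k+1) - u k := sub_nonneg.2 (hu (Nat.le_succ k))
    -- the increment and its law
    have hDmeas : Measurable (fun ω => W (u (k+1)) ω - W (u k) ω) :=
      (hW.meas _).sub (hW.meas _)
    have hDlaw : Measure.map (fun ω => W (u (k+1)) ω - W (u k) ω) P
        = gaussianReal 0 (Real.toNNReal (u (k+1) - u k)) :=
      hW.gauss (u k) (u (k+1)) (hu0 ▸ hu (Nat.zero_le k)) (hu (Nat.le_succ k))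
    have hmgf : ∫⁻ ω, ENNReal.ofReal (Real.exp ((2*β) * (W (u (k+1)) ω - W (u k) ω))) ∂P
        = ENNReal.ofReal (Real.exp ((2*β)^2 * (u (k+1) - u k) / 2)) := by
      rw [lintegral_exp_map hDmeas hDlaw (2*β), Real.coe_toNNReal _ hd0]
    have hA : Measurable (fun ω => ENNReal.ofReal (Real.exp (2 * β * (W (u k) ω - β * u k)))) :=
      ENNReal.measurable_ofReal.comp (Real.measurable_exp.comp
        (((hW.meas _).sub measurable_const).const_mul (2*β)))
    have hG : Measurable (fun ω => ENNReal.ofReal (Real.exp ((2*β) * (W (u (k+1)) ω - W (u k) ω)))) :=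
      ENNReal.measurable_ofReal.comp (Real.measurable_exp.comp
        (((hW.meas _).sub (hW.meas _)).const_mul (2*β)))
    -- independence
    have hIF : IndepFun
        (Set.indicator {ω : Ω | ∀ j ≤ k, W (u j) ω - β * u j ≤ α}
          (fun ω => ENNReal.ofReal (Real.exp (2 * β * (W (u k) ω - β * u k)))))
        (fun ω => ENNReal.ofReal (Real.exp ((2*β) * (W (u (k+1)) ω - W (u k) ω)))) P := by
      have hI := hW.indep (k+1) (fun i => u i)
        (fun i => hu0 ▸ hu (Nat.zero_le _)) (fun i j hij => hu hij)
      rw [iIndepFun_iff_iIndep] at hI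
      simp only [Fin.val_succ, Fin.coe_castSucc] at hI
      have h2 := indep_iSup_of_disjoint
        (fun i => measurable_iff_comap_le.mp ((hW.meas _).sub (hW.meas _))) hI
        (disjoint_compl_left (a := ({Fin.last k} : Set (Fin (k+1)))))
      simp only [Set.mem_singleton_iff, iSup_iSup_eq_left, Fin.val_last] at h2
      rw [IndepFun_iff_Indep]
      refine indep_mono h2 ?_ ?_
      · refine measurable_iff_comap_le.mp ?_
        have hWj : ∀ j : ℕ, j ≤ k → Measurable[⨆ i ∈ ({Fin.last k}ᶜ : Set (Fin (k+1))),
            MeasurableSpace.comap (fun ω => W (u ((i:ℕ)+1)) ω - W (u (i:ℕ)) ω) inferInstance]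
            (fun ω => W (u j) ω) := by
          intro j
          induction j with
          | zero =>
            intro _
            have : (fun ω : Ω => W (u 0) ω) = fun _ => (0:ℝ) :=
              funext fun ω => by rw [hu0]; exact hW.init ω
            rw [this]; exact measurable_const
          | succ j ihj =>
            intro hj
            have hjlt : j < k := hj
            have hmem : (⟨j, by omega⟩ : Fin (k+1)) ∈ ({Fin.last k}ᶜ : Set (Fin (k+1))) := by
              simp only [Set.mem_compl_iff, Set.mem_singleton_iff]
              intro hcontr
              have : j = k := by
                have := congrArg Fin.val hcontr
                simpa using this
              omega
            have hinc : Measurable[⨆ i ∈ ({Fin.last k}ᶜ : Set (Fin (k+1))),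
                MeasurableSpace.comap (fun ω => W (u ((i:ℕ)+1)) ω - W (u (i:ℕ)) ω) inferInstance]
                (fun ω => W (u (j+1)) ω - W (u j) ω) :=
              measurable_iff_comap_le.mpr (le_biSup
                (fun i : Fin (k+1) => MeasurableSpace.comap
                  (fun ω => W (u ((i:ℕ)+1)) ω - W (u (i:ℕ)) ω) inferInstance) hmem)
            have heq : (fun ω : Ω => W (u (j+1)) ω)
                = fun ω => (W (u j) ω) + (W (u (j+1)) ω - W (u j) ω) :=
              funext fun ω => by ring
            rw [heq]
            exact Measurable.add (ihj (by omega)) hinc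
        have hSM1 : MeasurableSet[⨆ i ∈ ({Fin.last k}ᶜ : Set (Fin (k+1))),
            MeasurableSpace.comap (fun ω => W (u ((i:ℕ)+1)) ω - W (u (i:ℕ)) ω) inferInstance]
            {ω : Ω | ∀ j ≤ k, W (u j) ω - β * u j ≤ α} := by
          rw [Set.setOf_forall]
          refine MeasurableSet.iInter fun j => ?_
          rw [Set.setOf_forall]
          refine MeasurableSet.iInter fun hj => ?_
          exact measurableSet_le ((hWj j hj).sub measurable_const) measurable_const
        refine Measurable.indicator ?_ hSM1
        exact ENNReal.measurable_ofReal.comp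
          (Real.measurable_exp.comp (((hWj k le_rfl).sub measurable_const).const_mul (2*β)))
      · refine measurable_iff_comap_le.mp ?_
        exact (ENNReal.measurable_ofReal.comp
          (Real.measurable_exp.comp (measurable_id.const_mul (2*β)))).comp
          (Measurable.of_comap_le le_rfl)
    -- global measurability of the two factors
    have hFmeas : Measurable (Set.indicator {ω : Ω | ∀ j ≤ k, W (u j) ω - β * u j ≤ α}
        (fun ω => ENNReal.ofReal (Real.exp (2 * β * (W (u k) ω - β * u k))))) :=
      Measurable.indicator hA hSm
    have hGmeas : Measurable
        (fun ω => ENNReal.ofReal (Real.exp ((2*β) * (W (u (k+1)) ω - W (u k) ω)))) := hG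
    -- the key step
    have key : ∫⁻ ω in {ω : Ω | ∀ j ≤ k, W (u j) ω - β * u j ≤ α},
          ENNReal.ofReal (Real.exp (2*β*(W (u (k+1)) ω - β * u (k+1)))) ∂P
        = ∫⁻ ω in {ω : Ω | ∀ j ≤ k, W (u j) ω - β * u j ≤ α},
          ENNReal.ofReal (Real.exp (2*β*(W (u k) ω - β * u k))) ∂P := by
      have hpoint : ∀ ω : Ω, ENNReal.ofReal (Real.exp (2*β*(W (u (k+1)) ω - β * u (k+1))))
          = ENNReal.ofReal (Real.exp (-(2*β^2*(u (k+1) - u k))))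
            * (ENNReal.ofReal (Real.exp (2*β*(W (u k) ω - β * u k)))
              * ENNReal.ofReal (Real.exp ((2*β) * (W (u (k+1)) ω - W (u k) ω)))) := by
        intro ω
        rw [← ENNReal.ofReal_mul (Real.exp_nonneg _), ← ENNReal.ofReal_mul (Real.exp_nonneg _),
          ← Real.exp_add, ← Real.exp_add]
        congr 2
        ring
      calc ∫⁻ ω in {ω : Ω | ∀ j ≤ k, W (u j) ω - β * u j ≤ α},
            ENNReal.ofReal (Real.exp (2*β*(W (u (k+1)) ω - β * u (k+1)))) ∂P
          = ENNReal.ofReal (Real.exp (-(2*β^2*(u (k+1) - u k))))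
            * ∫⁻ ω in {ω : Ω | ∀ j ≤ k, W (u j) ω - β * u j ≤ α},
              ENNReal.ofReal (Real.exp (2*β*(W (u k) ω - β * u k)))
              * ENNReal.ofReal (Real.exp ((2*β) * (W (u (k+1)) ω - W (u k) ω))) ∂P := by
            simp_rw [hpoint]
            rw [lintegral_const_mul _ (by exact hA.mul hG)]
        _ = ENNReal.ofReal (Real.exp (-(2*β^2*(u (k+1) - u k))))
            * ∫⁻ ω, (Set.indicator {ω : Ω | ∀ j ≤ k, W (u j) ω - β * u j ≤ α}
                (fun ω => ENNReal.ofReal (Real.exp (2 * β * (W (u k) ω - β * u k)))) ω)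
              * ENNReal.ofReal (Real.exp ((2*β) * (W (u (k+1)) ω - W (u k) ω))) ∂P := by
            congr 1
            rw [← lintegral_indicator hSm]
            congr 1
            funext ω
            by_cases hω : ω ∈ {ω : Ω | ∀ j ≤ k, W (u j) ω - β * u j ≤ α}
            · rw [Set.indicator_of_mem hω, Set.indicator_of_mem hω]
            · rw [Set.indicator_of_notMem hω, Set.indicator_of_notMem hω, zero_mul]
        _ = ENNReal.ofReal (Real.exp (-(2*β^2*(u (k+1) - u k))))
            * ((∫⁻ ω, (Set.indicator {ω : Ω | ∀ j ≤ k, W (u j) ω - β * u j ≤ α}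
                (fun ω => ENNReal.ofReal (Real.exp (2 * β * (W (u k) ω - β * u k)))) ω) ∂P)
              * ∫⁻ ω, ENNReal.ofReal (Real.exp ((2*β) * (W (u (k+1)) ω - W (u k) ω))) ∂P) := by
            congr 1
            exact lintegral_mul_eq_lintegral_mul_lintegral_of_indepFun hFmeas hGmeas hIF
        _ = ∫⁻ ω in {ω : Ω | ∀ j ≤ k, W (u j) ω - β * u j ≤ α},
              ENNReal.ofReal (Real.exp (2*β*(W (u k) ω - β * u k))) ∂P := by
            rw [hmgf, ← lintegral_indicator hSm, mul_comm
              (∫⁻ ω, (Set.indicator _ _ ω) ∂P), ← mul_assoc,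
              ← ENNReal.ofReal_mul (Real.exp_nonneg _), ← Real.exp_add]
            have : -(2*β^2*(u (k+1) - u k)) + (2*β)^2 * (u (k+1) - u k) / 2 = 0 := by ring
            rw [this, Real.exp_zero, ENNReal.ofReal_one, one_mul]
    -- assemble
    rw [← lintegral_add_compl
      (fun ω => ENNReal.ofReal (Real.exp (2 * β * Zp W β α u (k+1) ω))) hSm]
    have hcong1 : ∫⁻ ω in {ω : Ω | ∀ j ≤ k, W (u j) ω - β * u j ≤ α},
          ENNReal.ofReal (Real.exp (2*β*Zp W β α u (k+1) ω)) ∂P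
        = ∫⁻ ω in {ω : Ω | ∀ j ≤ k, W (u j) ω - β * u j ≤ α},
          ENNReal.ofReal (Real.exp (2*β*(W (u (k+1)) ω - β * u (k+1)))) ∂P :=
      setLIntegral_congr_fun hSm (fun ω hω => by
        beta_reduce
        rw [Zp_succ, if_pos (show ∀ j ≤ k, W (u j) ω - β * u j ≤ α from hω)])
    have hcong2 : ∫⁻ ω in {ω : Ω | ∀ j ≤ k, W (u j) ω - β * u j ≤ α}ᶜ,
          ENNReal.ofReal (Real.exp (2*β*Zp W β α u (k+1) ω)) ∂P
        = ∫⁻ ω in {ω : Ω | ∀ j ≤ k, W (u j) ω - β * u j ≤ α}ᶜ,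
          ENNReal.ofReal (Real.exp (2*β*Zp W β α u k ω)) ∂P :=
      setLIntegral_congr_fun hSm.compl (fun ω hω => by
        beta_reduce
        rw [Zp_succ, if_neg (show ¬∀ j ≤ k, W (u j) ω - β * u j ≤ α from hω)])
    have hcong3 : ∫⁻ ω in {ω : Ω | ∀ j ≤ k, W (u j) ω - β * u j ≤ α},
          ENNReal.ofReal (Real.exp (2*β*(W (u k) ω - β * u k))) ∂P
        = ∫⁻ ω in {ω : Ω | ∀ j ≤ k, W (u j) ω - β * u j ≤ α},
          ENNReal.ofReal (Real.exp (2*β*Zp W β α u k ω)) ∂P :=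
      setLIntegral_congr_fun hSm (fun ω hω => by
        beta_reduce
        rw [Zp_surv (hX0 ω) k (show ∀ j ≤ k, W (u j) ω - β * u j ≤ α from hω)])
    rw [hcong1, hcong2, key, hcong3,
      lintegral_add_compl (fun ω => ENNReal.ofReal (Real.exp (2 * β * Zp W β α u k ω))) hSm, ih]

lemma hit_upper (hW : IsStdBM P W) [IsProbabilityMeasure P] {α β : ℝ} (hα : 0 < α) (hβ : 0 < β)
    {u : ℕ → ℝ} (hu0 : u 0 = 0) (hu : Monotone u) (m : ℕ) :
    P {ω : Ω | ∃ j ≤ m, α < W (u j) ω - β * u j}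
      ≤ ENNReal.ofReal (Real.exp (-(2*α*β))) := by
  have hX0 : ∀ ω : Ω, W (u 0) ω - β * u 0 = 0 := fun ω => by rw [hu0, hW.init ω]; ring
  have hcompl : {ω : Ω | ∃ j ≤ m, α < W (u j) ω - β * u j}
      = {ω : Ω | ∀ j ≤ m, W (u j) ω - β * u j ≤ α}ᶜ := by
    ext ω
    simp only [Set.mem_setOf_eq, Set.mem_compl_iff, not_forall, not_le, exists_prop]
  have hSm := survSet_meas (W := W) hW.meas β α u m
  have key := Zp_lintegral hW α β hu0 hu m
  have hineq : ENNReal.ofReal (Real.exp (2*β*α))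
      * P {ω : Ω | ∃ j ≤ m, α < W (u j) ω - β * u j} ≤ 1 := by
    rw [← key, hcompl]
    calc ENNReal.ofReal (Real.exp (2*β*α))
        * P {ω : Ω | ∀ j ≤ m, W (u j) ω - β * u j ≤ α}ᶜ
        = ∫⁻ _ in {ω : Ω | ∀ j ≤ m, W (u j) ω - β * u j ≤ α}ᶜ,
            ENNReal.ofReal (Real.exp (2*β*α)) ∂P := by
          rw [setLIntegral_const]
      _ ≤ ∫⁻ ω in {ω : Ω | ∀ j ≤ m, W (u j) ω - β * u j ≤ α}ᶜ,
            ENNReal.ofReal (Real.exp (2 * β * Zp W β α u m ω)) ∂P := by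
          refine setLIntegral_mono (ENNReal.measurable_ofReal.comp
            (Real.measurable_exp.comp ((Zp_meas hW.meas β α u m).const_mul (2*β)))) ?_
          intro ω hω
          have h1 := (Zp_hit hα (hX0 ω) m hω).1
          exact ENNReal.ofReal_le_ofReal (Real.exp_le_exp.2 (by nlinarith))
      _ ≤ ∫⁻ ω, ENNReal.ofReal (Real.exp (2 * β * Zp W β α u m ω)) ∂P :=
          setLIntegral_le_lintegral _ _
  calc P {ω : Ω | ∃ j ≤ m, α < W (u j) ω - β * u j}
      = ENNReal.ofReal (Real.exp (-(2*α*β))) * (ENNReal.ofReal (Real.exp (2*β*α))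
        * P {ω : Ω | ∃ j ≤ m, α < W (u j) ω - β * u j}) := by
        rw [← mul_assoc, ← ENNReal.ofReal_mul (Real.exp_nonneg _), ← Real.exp_add,
          show -(2*α*β) + 2*β*α = 0 by ring, Real.exp_zero, ENNReal.ofReal_one, one_mul]
    _ ≤ ENNReal.ofReal (Real.exp (-(2*α*β))) * 1 := mul_le_mul_right hineq _
    _ = ENNReal.ofReal (Real.exp (-(2*α*β))) := mul_one _

lemma lower_step (hW : IsStdBM P W) [IsProbabilityMeasure P] {α β : ℝ} (hα : 0 < α) (hβ : 0 < β)
    (n T : ℕ) (hn : 0 < n) (hT : 0 < T) {ε : ℝ} (hε : 0 < ε)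
    (u : ℕ → ℝ) (hud : ∀ j : ℕ, u j = (j:ℝ)/(n:ℝ)) :
    (1:ℝ≥0∞) ≤ ENNReal.ofReal (Real.exp (2*β*(α+ε)))
        * P {ω : Ω | ¬∀ j ≤ T*n, W (u j) ω - β * u j ≤ α}
      + (T*n : ℕ) * (ENNReal.ofReal (Real.exp (2*β*α))
          * ENNReal.ofReal (Real.exp ((2*β+ε*(n:ℝ))^2*((1:ℝ)/(n:ℝ))/2 - (ε*(n:ℝ))*ε)))
      + ENNReal.ofReal (Real.exp (2*β*(α - β*(T:ℝ)/2)))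
      + ENNReal.ofReal (Real.exp (2*β*α))
          * ENNReal.ofReal (Real.exp ((((α + β*(T:ℝ)/2)/(T:ℝ))^2 * (T:ℝ) / 2
              - ((α + β*(T:ℝ)/2)/(T:ℝ)) * (α + β*(T:ℝ)/2)))) := by
  have hn' : (0:ℝ) < n := by exact_mod_cast hn
  have hT' : (0:ℝ) < T := by exact_mod_cast hT
  have hu0 : u 0 = 0 := by rw [hud]; simp
  have hu : Monotone u := by
    intro i j hij
    rw [hud, hud]
    exact (div_le_div_iff_of_pos_right hn').mpr (by exact_mod_cast hij)
  have hX0 : ∀ ω : Ω, W (u 0) ω - β * u 0 = 0 := fun ω => by rw [hu0, hW.init ω]; ring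
  have hstep : ∀ j : ℕ, u (j+1) - u j = 1/(n:ℝ) := by
    intro j
    rw [hud, hud]
    push_cast
    field_simp
    ring
  have huK : u (T*n) = (T:ℝ) := by
    rw [hud]
    push_cast
    field_simp
  have hSm := survSet_meas (W := W) hW.meas β α u (T*n)
  have key := Zp_lintegral hW α β hu0 hu (T*n)
  rw [← lintegral_add_compl
    (fun ω => ENNReal.ofReal (Real.exp (2 * β * Zp W β α u (T*n) ω))) hSm] at key
  -- survival part bound
  have hsurv : ∫⁻ ω in {ω : Ω | ∀ j ≤ T*n, W (u j) ω - β * u j ≤ α},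
        ENNReal.ofReal (Real.exp (2 * β * Zp W β α u (T*n) ω)) ∂P
      ≤ ENNReal.ofReal (Real.exp (2*β*(α - β*(T:ℝ)/2)))
        + ENNReal.ofReal (Real.exp (2*β*α))
          * ENNReal.ofReal (Real.exp ((((α + β*(T:ℝ)/2)/(T:ℝ))^2 * (T:ℝ) / 2
              - ((α + β*(T:ℝ)/2)/(T:ℝ)) * (α + β*(T:ℝ)/2)))) := by
    have hWTmeas : Measurable (fun ω => W ((T:ℝ)) ω) := hW.meas _
    have hWTlaw : Measure.map (fun ω => W ((T:ℝ)) ω) P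
        = gaussianReal 0 (Real.toNNReal ((T:ℝ))) := by
      have h0 := hW.gauss 0 (T:ℝ) le_rfl (le_of_lt hT')
      have heq : (fun ω => W ((T:ℝ)) ω - W 0 ω) = fun ω => W ((T:ℝ)) ω :=
        funext fun ω => by rw [hW.init ω]; ring
      rw [heq] at h0
      rw [h0]
      norm_num
    calc ∫⁻ ω in {ω : Ω | ∀ j ≤ T*n, W (u j) ω - β * u j ≤ α},
          ENNReal.ofReal (Real.exp (2 * β * Zp W β α u (T*n) ω)) ∂P
        ≤ ∫⁻ ω in {ω : Ω | ∀ j ≤ T*n, W (u j) ω - β * u j ≤ α},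
            (ENNReal.ofReal (Real.exp (2*β*(α - β*(T:ℝ)/2)))
            + (if α + β*(T:ℝ)/2 < W ((T:ℝ)) ω
                then ENNReal.ofReal (Real.exp (2*β*α)) else 0)) ∂P := by
          refine setLIntegral_mono (by
            refine Measurable.const_add (Measurable.ite ?_ measurable_const
              measurable_const) _
            exact measurableSet_lt measurable_const hWTmeas) ?_
          intro ω hω
          have hZeq : Zp W β α u (T*n) ω = W (u (T*n)) ω - β * u (T*n) :=
            Zp_surv (hX0 ω) (T*n) hω
          have hle : W (u (T*n)) ω - β * u (T*n) ≤ α := hω (T*n) le_rfl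
          rw [huK] at hZeq hle
          rw [hZeq]
          by_cases hc : W ((T:ℝ)) ω - β * (T:ℝ) ≤ α - β*(T:ℝ)/2
          · refine le_add_right (ENNReal.ofReal_le_ofReal (Real.exp_le_exp.2 ?_))
            nlinarith
          · rw [if_pos (show α + β*(T:ℝ)/2 < W ((T:ℝ)) ω by push_neg at hc; linarith)]
            refine le_add_left (ENNReal.ofReal_le_ofReal (Real.exp_le_exp.2 ?_))
            nlinarith
      _ ≤ ∫⁻ ω, (ENNReal.ofReal (Real.exp (2*β*(α - β*(T:ℝ)/2)))
            + (if α + β*(T:ℝ)/2 < W ((T:ℝ)) ω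
                then ENNReal.ofReal (Real.exp (2*β*α)) else 0)) ∂P :=
          setLIntegral_le_lintegral _ _
      _ = ENNReal.ofReal (Real.exp (2*β*(α - β*(T:ℝ)/2)))
          + ENNReal.ofReal (Real.exp (2*β*α))
            * P {ω : Ω | α + β*(T:ℝ)/2 < W ((T:ℝ)) ω} := by
          rw [lintegral_add_left measurable_const, lintegral_const, measure_univ, mul_one]
          congr 1
          have : (fun ω : Ω => (if α + β*(T:ℝ)/2 < W ((T:ℝ)) ω
              then ENNReal.ofReal (Real.exp (2*β*α)) else 0))
              = Set.indicator {ω : Ω | α + β*(T:ℝ)/2 < W ((T:ℝ)) ω}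
                (fun _ => ENNReal.ofReal (Real.exp (2*β*α))) := by
            funext ω
            by_cases h : α + β*(T:ℝ)/2 < W ((T:ℝ)) ω
            · rw [if_pos h]
              exact (Set.indicator_of_mem
                (show ω ∈ {ω : Ω | α + β*(T:ℝ)/2 < W ((T:ℝ)) ω} from h)
                (fun _ => ENNReal.ofReal (Real.exp (2*β*α)))).symm
            · rw [if_neg h]
              exact (Set.indicator_of_notMem
                (show ω ∉ {ω : Ω | α + β*(T:ℝ)/2 < W ((T:ℝ)) ω} from h)
                (f := fun _ => ENNReal.ofReal (Real.exp (2*β*α)))).symm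
          rw [this, lintegral_indicator (measurableSet_lt measurable_const hWTmeas),
            setLIntegral_const]
      _ ≤ _ := by
          refine add_le_add le_rfl (mul_le_mul_right ?_ _)
          have := gauss_tail (P := P) hWTmeas hWTlaw
            (a := α + β*(T:ℝ)/2) (s := (α + β*(T:ℝ)/2)/(T:ℝ))
            (by positivity)
          refine le_trans this (le_of_eq ?_)
          congr 2
          rw [Real.coe_toNNReal _ (le_of_lt hT')]
  -- hit part bound
  have hhit : ∫⁻ ω in {ω : Ω | ∀ j ≤ T*n, W (u j) ω - β * u j ≤ α}ᶜ,
        ENNReal.ofReal (Real.exp (2 * β * Zp W β α u (T*n) ω)) ∂P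
      ≤ ENNReal.ofReal (Real.exp (2*β*(α+ε)))
          * P {ω : Ω | ¬∀ j ≤ T*n, W (u j) ω - β * u j ≤ α}
        + (T*n : ℕ) * (ENNReal.ofReal (Real.exp (2*β*α))
          * ENNReal.ofReal (Real.exp ((2*β+ε*(n:ℝ))^2*((1:ℝ)/(n:ℝ))/2 - (ε*(n:ℝ))*ε))) := by
    have htruncmeas : ∀ j : ℕ, Measurable (fun ω =>
        if ε < (W (u (j+1)) ω - β * u (j+1)) - (W (u j) ω - β * u j)
        then ENNReal.ofReal (Real.exp (2*β*(α + ((W (u (j+1)) ω - β * u (j+1))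
          - (W (u j) ω - β * u j))))) else 0) := by
      intro j
      refine Measurable.ite (measurableSet_lt measurable_const
        (((hW.meas _).sub measurable_const).sub ((hW.meas _).sub measurable_const))) ?_
        measurable_const
      exact ENNReal.measurable_ofReal.comp (Real.measurable_exp.comp
        ((measurable_const.add (((hW.meas _).sub measurable_const).sub
          ((hW.meas _).sub measurable_const))).const_mul (2*β)))
    calc ∫⁻ ω in {ω : Ω | ∀ j ≤ T*n, W (u j) ω - β * u j ≤ α}ᶜ,
          ENNReal.ofReal (Real.exp (2 * β * Zp W β α u (T*n) ω)) ∂P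
        ≤ ∫⁻ ω in {ω : Ω | ∀ j ≤ T*n, W (u j) ω - β * u j ≤ α}ᶜ,
            (ENNReal.ofReal (Real.exp (2*β*(α+ε)))
            + ∑ j ∈ Finset.range (T*n),
                (if ε < (W (u (j+1)) ω - β * u (j+1)) - (W (u j) ω - β * u j)
                then ENNReal.ofReal (Real.exp (2*β*(α + ((W (u (j+1)) ω - β * u (j+1))
                  - (W (u j) ω - β * u j))))) else 0)) ∂P := by
          refine setLIntegral_mono (Measurable.add measurable_const
            (Finset.measurable_sum _ (fun j _ => htruncmeas j))) ?_
          intro ω hω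
          obtain ⟨h1, j, hjK, h2⟩ := Zp_hit hα (hX0 ω) (T*n) hω
          by_cases hcase : (W (u (j+1)) ω - β * u (j+1)) - (W (u j) ω - β * u j) ≤ ε
          · refine le_add_right (ENNReal.ofReal_le_ofReal (Real.exp_le_exp.2 ?_))
            nlinarith
          · refine le_add_left (le_trans ?_ (Finset.single_le_sum
              (f := fun j =>
                if ε < (W (u (j+1)) ω - β * u (j+1)) - (W (u j) ω - β * u j)
                then ENNReal.ofReal (Real.exp (2*β*(α + ((W (u (j+1)) ω - β * u (j+1))
                  - (W (u j) ω - β * u j))))) else 0)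
              (fun i _ => zero_le) (Finset.mem_range.2 hjK)))
            beta_reduce
            rw [if_pos (not_le.1 hcase)]
            exact ENNReal.ofReal_le_ofReal (Real.exp_le_exp.2 (by nlinarith))
      _ ≤ ENNReal.ofReal (Real.exp (2*β*(α+ε)))
            * P {ω : Ω | ∀ j ≤ T*n, W (u j) ω - β * u j ≤ α}ᶜ
          + ∑ j ∈ Finset.range (T*n), ∫⁻ ω,
                (if ε < (W (u (j+1)) ω - β * u (j+1)) - (W (u j) ω - β * u j)
                then ENNReal.ofReal (Real.exp (2*β*(α + ((W (u (j+1)) ω - β * u (j+1))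
                  - (W (u j) ω - β * u j))))) else 0) ∂P := by
          rw [lintegral_add_left measurable_const, setLIntegral_const]
          refine add_le_add le_rfl ?_
          refine le_trans (setLIntegral_le_lintegral _ _) ?_
          rw [lintegral_finset_sum _ (fun j _ => htruncmeas j)]
      _ ≤ _ := by
          have hPeq : P {ω : Ω | ∀ j ≤ T*n, W (u j) ω - β * u j ≤ α}ᶜ
              = P {ω : Ω | ¬∀ j ≤ T*n, W (u j) ω - β * u j ≤ α} := rfl
          rw [hPeq]
          refine add_le_add le_rfl ?_
          -- bound each truncated integral
          have hsingle : ∀ j : ℕ, ∫⁻ ω,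
                (if ε < (W (u (j+1)) ω - β * u (j+1)) - (W (u j) ω - β * u j)
                then ENNReal.ofReal (Real.exp (2*β*(α + ((W (u (j+1)) ω - β * u (j+1))
                  - (W (u j) ω - β * u j))))) else 0) ∂P
              ≤ ENNReal.ofReal (Real.exp (2*β*α))
                * ENNReal.ofReal (Real.exp ((2*β+ε*(n:ℝ))^2*((1:ℝ)/(n:ℝ))/2 - (ε*(n:ℝ))*ε)) := by
            intro j
            have hDmeas : Measurable (fun ω => W (u (j+1)) ω - W (u j) ω) :=
              (hW.meas _).sub (hW.meas _)
            have hDlaw : Measure.map (fun ω => W (u (j+1)) ω - W (u j) ω) P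
                = gaussianReal 0 (Real.toNNReal ((1:ℝ)/(n:ℝ))) := by
              have := hW.gauss (u j) (u (j+1))
                (by rw [hud]; positivity) (hu (Nat.le_succ j))
              rw [hstep j] at this
              exact this
            have hpt : ∀ ω : Ω,
                (if ε < (W (u (j+1)) ω - β * u (j+1)) - (W (u j) ω - β * u j)
                then ENNReal.ofReal (Real.exp (2*β*(α + ((W (u (j+1)) ω - β * u (j+1))
                  - (W (u j) ω - β * u j))))) else 0)
                ≤ ENNReal.ofReal (Real.exp (2*β*α))
                  * (if ε < W (u (j+1)) ω - W (u j) ω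
                    then ENNReal.ofReal (Real.exp ((2*β) * (W (u (j+1)) ω - W (u j) ω)))
                    else 0) := by
              intro ω
              have hd : (W (u (j+1)) ω - β * u (j+1)) - (W (u j) ω - β * u j)
                  = (W (u (j+1)) ω - W (u j) ω) - β * (1/(n:ℝ)) := by
                have := hstep j
                nlinarith [hstep j]
              by_cases hc : ε < (W (u (j+1)) ω - β * u (j+1)) - (W (u j) ω - β * u j)
              · rw [if_pos hc, if_pos (by
                  rw [hd] at hc
                  have h0 : (0:ℝ) ≤ β * (1/(n:ℝ)) := by positivity
                  linarith)]
                rw [← ENNReal.ofReal_mul (Real.exp_nonneg _), ← Real.exp_add]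
                refine ENNReal.ofReal_le_ofReal (Real.exp_le_exp.2 ?_)
                rw [hd]
                have hpos : 0 ≤ β * (1/(n:ℝ)) := by positivity
                nlinarith
              · rw [if_neg hc]
                exact zero_le
            refine le_trans (lintegral_mono hpt) ?_
            rw [lintegral_const_mul _ (by
              refine Measurable.ite (measurableSet_lt measurable_const hDmeas) ?_ measurable_const
              exact ENNReal.measurable_ofReal.comp (Real.measurable_exp.comp
                (hDmeas.const_mul (2*β))))]
            refine mul_le_mul_right ?_ _
            have := gauss_trunc (P := P) hDmeas hDlaw (ε := ε) (s := 2*β) (c := ε*(n:ℝ))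
              (by positivity)
            refine le_trans this (le_of_eq ?_)
            congr 2
            rw [Real.coe_toNNReal _ (by positivity)]
          calc ∑ j ∈ Finset.range (T*n), ∫⁻ ω,
                (if ε < (W (u (j+1)) ω - β * u (j+1)) - (W (u j) ω - β * u j)
                then ENNReal.ofReal (Real.exp (2*β*(α + ((W (u (j+1)) ω - β * u (j+1))
                  - (W (u j) ω - β * u j))))) else 0) ∂P
              ≤ ∑ _j ∈ Finset.range (T*n), (ENNReal.ofReal (Real.exp (2*β*α))
                * ENNReal.ofReal (Real.exp ((2*β+ε*(n:ℝ))^2*((1:ℝ)/(n:ℝ))/2 - (ε*(n:ℝ))*ε))) :=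
              Finset.sum_le_sum (fun j _ => hsingle j)
            _ = (T*n : ℕ) * (ENNReal.ofReal (Real.exp (2*β*α))
                * ENNReal.ofReal (Real.exp ((2*β+ε*(n:ℝ))^2*((1:ℝ)/(n:ℝ))/2 - (ε*(n:ℝ))*ε))) := by
              rw [Finset.sum_const, Finset.card_range, nsmul_eq_mul]
  calc (1:ℝ≥0∞) = _ := key.symm
    _ ≤ _ := add_le_add hsurv hhit
    _ ≤ _ := by
        rw [add_comm]
        exact le_of_eq (by ring)

lemma lim_t2 (T : ℕ) (β α ε : ℝ) (hβ : 0 < β) (hε : 0 < ε) :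
    Tendsto (fun n : ℕ => ((T*n : ℕ):ℝ) * (Real.exp (2*β*α)
      * Real.exp ((2*β+ε*(n:ℝ))^2*((1:ℝ)/(n:ℝ))/2 - (ε*(n:ℝ))*ε))) atTop (nhds 0) := by
  have hc : (0:ℝ) < ε^2/2 := by positivity
  have hbase : Tendsto (fun x : ℝ => x * Real.exp (-x)) atTop (nhds 0) := by
    simpa using Real.tendsto_pow_mul_exp_neg_atTop_nhds_zero 1
  have hcomp : Tendsto (fun x : ℝ => (ε^2/2 * x) * Real.exp (-(ε^2/2 * x))) atTop (nhds 0) :=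
    hbase.comp (Tendsto.const_mul_atTop hc tendsto_id)
  have hg : Tendsto (fun x : ℝ => x * Real.exp (-(ε^2/2) * x)) atTop (nhds 0) := by
    have h2 : Tendsto (fun x : ℝ => (2/ε^2) * ((ε^2/2 * x) * Real.exp (-(ε^2/2 * x))))
        atTop (nhds ((2/ε^2) * 0)) := hcomp.const_mul _
    rw [mul_zero] at h2
    refine h2.congr fun x => ?_
    have hε2 : ε^2 ≠ 0 := by positivity
    field_simp
  have hgn : Tendsto (fun n : ℕ => ((n:ℝ) * Real.exp (-(ε^2/2) * (n:ℝ)))) atTop (nhds 0) :=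
    hg.comp tendsto_natCast_atTop_atTop
  have hC : Tendsto (fun n : ℕ => (T:ℝ) * Real.exp (2*β*α + 2*β^2 + 2*β*ε)
      * ((n:ℝ) * Real.exp (-(ε^2/2) * (n:ℝ)))) atTop (nhds 0) := by
    have := hgn.const_mul ((T:ℝ) * Real.exp (2*β*α + 2*β^2 + 2*β*ε))
    rwa [mul_zero] at this
  refine squeeze_zero' ?_ ?_ hC
  · exact Filter.Eventually.of_forall fun n => by positivity
  · filter_upwards [Filter.eventually_ge_atTop 1] with n hn
    have hn' : (1:ℝ) ≤ (n:ℝ) := by exact_mod_cast hn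
    have hn0 : (0:ℝ) < (n:ℝ) := by linarith
    push_cast
    have hexp : (2*β+ε*(n:ℝ))^2*((1:ℝ)/(n:ℝ))/2 - (ε*(n:ℝ))*ε
        ≤ 2*β^2 + 2*β*ε + (-(ε^2/2) * (n:ℝ)) := by
      have hkey : (2*β+ε*(n:ℝ))^2*((1:ℝ)/(n:ℝ))/2
          = 2*β^2/(n:ℝ) + 2*β*ε + ε^2*(n:ℝ)/2 := by
        field_simp
        ring
      rw [hkey]
      have h1 : 2*β^2/(n:ℝ) ≤ 2*β^2 := by
        rw [div_le_iff₀ hn0]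
        nlinarith
      nlinarith
    calc (T:ℝ)*(n:ℝ) * (Real.exp (2*β*α)
          * Real.exp ((2*β+ε*(n:ℝ))^2*((1:ℝ)/(n:ℝ))/2 - (ε*(n:ℝ))*ε))
        ≤ (T:ℝ)*(n:ℝ) * (Real.exp (2*β*α)
          * Real.exp (2*β^2 + 2*β*ε + (-(ε^2/2) * (n:ℝ)))) := by
          have h := Real.exp_le_exp.2 hexp
          have hTn : (0:ℝ) ≤ (T:ℝ)*(n:ℝ) := by positivity
          exact mul_le_mul_of_nonneg_left
            (mul_le_mul_of_nonneg_left h (Real.exp_nonneg _)) hTn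
      _ = (T:ℝ) * Real.exp (2*β*α + 2*β^2 + 2*β*ε) * ((n:ℝ) * Real.exp (-(ε^2/2) * (n:ℝ))) := by
          have hE : Real.exp (2*β*α) * Real.exp (2*β^2 + 2*β*ε + (-(ε^2/2) * (n:ℝ)))
              = Real.exp (2*β*α + 2*β^2 + 2*β*ε) * Real.exp (-(ε^2/2) * (n:ℝ)) := by
            rw [← Real.exp_add, ← Real.exp_add]
            ring_nf
          rw [hE]
          ring
lemma lim_T (α β : ℝ) (hα : 0 < α) (hβ : 0 < β) :
    Tendsto (fun T : ℕ => Real.exp (2*β*(α - β*(T:ℝ)/2))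
      + Real.exp (2*β*α) * Real.exp ((((α + β*(T:ℝ)/2)/(T:ℝ))^2 * (T:ℝ) / 2
          - ((α + β*(T:ℝ)/2)/(T:ℝ)) * (α + β*(T:ℝ)/2)))) atTop (nhds 0) := by
  have hr1 : Real.exp (-(β^2)) < 1 := Real.exp_lt_one_iff.mpr (by nlinarith)
  have hr2 : Real.exp (-(β^2/8)) < 1 := Real.exp_lt_one_iff.mpr (by nlinarith)
  have hp1 : Tendsto (fun T : ℕ => Real.exp (-(β^2)) ^ T) atTop (nhds 0) :=
    tendsto_pow_atTop_nhds_zero_of_lt_one (Real.exp_nonneg _) hr1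
  have hp2 : Tendsto (fun T : ℕ => Real.exp (-(β^2/8)) ^ T) atTop (nhds 0) :=
    tendsto_pow_atTop_nhds_zero_of_lt_one (Real.exp_nonneg _) hr2
  have hsum : Tendsto (fun T : ℕ => Real.exp (2*β*α) * (Real.exp (-(β^2)) ^ T)
      + Real.exp (2*β*α) * (Real.exp (-(β^2/8)) ^ T)) atTop (nhds 0) := by
    have := (hp1.const_mul (Real.exp (2*β*α))).add (hp2.const_mul (Real.exp (2*β*α)))
    simpa using this
  refine squeeze_zero' ?_ ?_ hsum
  · exact Filter.Eventually.of_forall fun T => by positivity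
  · filter_upwards [Filter.eventually_ge_atTop 1] with T hT
    have hT' : (1:ℝ) ≤ (T:ℝ) := by exact_mod_cast hT
    have hT0 : (0:ℝ) < (T:ℝ) := by linarith
    have h1 : Real.exp (2*β*(α - β*(T:ℝ)/2)) ≤ Real.exp (2*β*α) * Real.exp (-(β^2)) ^ T := by
      rw [← Real.exp_nat_mul, ← Real.exp_add]
      refine Real.exp_le_exp.2 ?_
      nlinarith
    have h2 : Real.exp (2*β*α) * Real.exp ((((α + β*(T:ℝ)/2)/(T:ℝ))^2 * (T:ℝ) / 2
          - ((α + β*(T:ℝ)/2)/(T:ℝ)) * (α + β*(T:ℝ)/2)))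
        ≤ Real.exp (2*β*α) * Real.exp (-(β^2/8)) ^ T := by
      rw [← Real.exp_nat_mul, ← Real.exp_add, ← Real.exp_add, Real.exp_le_exp]
      have hkey : (((α + β*(T:ℝ)/2)/(T:ℝ))^2 * (T:ℝ) / 2
          - ((α + β*(T:ℝ)/2)/(T:ℝ)) * (α + β*(T:ℝ)/2))
          = -((α + β*(T:ℝ)/2)^2/(2*(T:ℝ))) := by
        field_simp
        ring
      rw [hkey]
      have hsq : β^2*(T:ℝ)^2/4 ≤ (α + β*(T:ℝ)/2)^2 := by nlinarith [sq_nonneg α, mul_pos (mul_pos hα hβ) hT0]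
      have : β^2*(T:ℝ)/8 ≤ (α + β*(T:ℝ)/2)^2/(2*(T:ℝ)) := by
        rw [div_le_div_iff₀ (by norm_num) (by linarith)]
        nlinarith
      nlinarith
    linarith
lemma lim_eps (α β : ℝ) :
    Tendsto (fun k : ℕ => Real.exp (-(2*β*(α + 1/((k:ℝ)+1))))) atTop
      (nhds (Real.exp (-(2*β*α)))) := by
  have h0 : Tendsto (fun k : ℕ => 1/((k:ℝ)+1)) atTop (nhds 0) :=
    tendsto_one_div_add_atTop_nhds_zero_nat
  have h1 : Tendsto (fun k : ℕ => -(2*β*(α + 1/((k:ℝ)+1)))) atTop (nhds (-(2*β*α))) := by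
    have h2 := ((h0.const_add α).const_mul (2*β)).neg
    simpa using h2
  exact (Real.continuous_exp.tendsto _).comp h1

lemma event_ae_eq (hW : IsStdBM P W) {α β : ℝ} (hα : 0 < α) :
    {ω : Ω | ∃ t : ℝ, 0 ≤ t ∧ W t ω - β * t > α}
      =ᵐ[P] {ω : Ω | ∃ q : ℚ, 0 ≤ (q:ℝ) ∧ α < W (q:ℝ) ω - β * (q:ℝ)} := by
  rw [Filter.eventuallyEq_set]
  filter_upwards [hW.cont] with ω hcont
  constructor
  · rintro ⟨t, ht0, hgt⟩
    have htpos : 0 < t := by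
      rcases lt_or_eq_of_le ht0 with h | h
      · exact h
      · exfalso
        rw [← h, hW.init ω] at hgt
        simp only [gt_iff_lt] at hgt
        nlinarith
    have hca : ContinuousAt (fun s => W s ω - β * s) t := by
      have h1 : ContinuousAt (fun s => W s ω) t :=
        (hcont t ht0).continuousAt (Ici_mem_nhds htpos)
      exact h1.sub (continuousAt_const.mul continuousAt_id)
    have hev : ∀ᶠ s in nhds t, α < W s ω - β * s :=
      hca.eventually_mem (lt_mem_nhds hgt)
    obtain ⟨δ, hδ, hball⟩ := Metric.eventually_nhds_iff_ball.mp hev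
    obtain ⟨q, hq1, hq2⟩ := exists_rat_btwn (show max (t-δ) (t/2) < t from
      max_lt (by linarith) (by linarith))
    have hq0 : (0:ℝ) ≤ (q:ℝ) := by
      have := lt_of_le_of_lt (le_max_right (t-δ) (t/2)) hq1
      linarith
    refine ⟨q, hq0, hball (q:ℝ) ?_⟩
    rw [Metric.mem_ball, Real.dist_eq, abs_of_neg (by linarith : (q:ℝ) - t < 0)]
    have := lt_of_le_of_lt (le_max_left (t-δ) (t/2)) hq1
    linarith
  · rintro ⟨q, hq0, hq⟩
    exact ⟨(q:ℝ), hq0, hq⟩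

lemma upper_glue (hW : IsStdBM P W) [IsProbabilityMeasure P] {α β : ℝ}
    (hα : 0 < α) (hβ : 0 < β) :
    P {ω : Ω | ∃ q : ℚ, 0 ≤ (q:ℝ) ∧ α < W (q:ℝ) ω - β * (q:ℝ)}
      ≤ ENNReal.ofReal (Real.exp (-(2*α*β))) := by
  set e : ℕ → ℚ := fun k => (Denumerable.eqv ℚ).symm k with he
  have hunion : {ω : Ω | ∃ q : ℚ, 0 ≤ (q:ℝ) ∧ α < W (q:ℝ) ω - β * (q:ℝ)}
      = ⋃ k : ℕ, {ω : Ω | ∃ j ≤ k, 0 ≤ ((e j : ℚ):ℝ) ∧ α < W ((e j : ℚ):ℝ) ω - β * ((e j : ℚ):ℝ)} := by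
    ext ω
    simp only [Set.mem_setOf_eq, Set.mem_iUnion]
    constructor
    · rintro ⟨q, h0, hq⟩
      refine ⟨(Denumerable.eqv ℚ) q, (Denumerable.eqv ℚ) q, le_rfl, ?_⟩
      rw [he]
      simp only [Equiv.symm_apply_apply]
      exact ⟨h0, hq⟩
    · rintro ⟨k, j, _, h0, hq⟩
      exact ⟨e j, h0, hq⟩
  rw [hunion]
  have hmono : Monotone (fun k => {ω : Ω | ∃ j ≤ k, 0 ≤ ((e j : ℚ):ℝ)
      ∧ α < W ((e j : ℚ):ℝ) ω - β * ((e j : ℚ):ℝ)}) := by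
    intro k l hkl ω
    rintro ⟨j, hj, h⟩
    exact ⟨j, hj.trans hkl, h⟩
  rw [Directed.measure_iUnion hmono.directed_le]
  refine iSup_le fun k => ?_
  -- build sorted times
  set F : Finset ℝ := insert 0 (((Finset.range (k+1)).image (fun j => ((e j : ℚ):ℝ))).filter
    (fun x => 0 ≤ x)) with hF
  have hF0 : (0:ℝ) ∈ F := Finset.mem_insert_self _ _
  have hFnonneg : ∀ x ∈ F, (0:ℝ) ≤ x := by
    intro x hx
    rcases Finset.mem_insert.mp hx with h | h
    · rw [h]
    · exact (Finset.mem_filter.mp h).2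
  have hFpos : 0 < F.card := Finset.card_pos.2 ⟨0, hF0⟩
  have hcard : F.card = (F.card - 1) + 1 := (Nat.succ_pred_eq_of_pos hFpos).symm
  set m := F.card - 1 with hm
  let iso := F.orderIsoOfFin hcard
  set v : ℕ → ℝ := fun j => (iso ⟨min j m, by omega⟩ : ℝ) with hv
  have hv_mono : Monotone v := by
    intro i j hij
    have : (⟨min i m, by omega⟩ : Fin (m+1)) ≤ ⟨min j m, by omega⟩ := by
      simp only [Fin.mk_le_mk]
      exact min_le_min_right m hij |>.trans_eq rfl
    exact Subtype.coe_le_coe.2 (iso.monotone this)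
  have hv_mem : ∀ j, v j ∈ F := fun j => (iso _).2
  have hv0 : v 0 = 0 := by
    refine le_antisymm ?_ (hFnonneg _ (hv_mem 0))
    have h0mem : ∃ i : Fin (m+1), (iso i : ℝ) = 0 := by
      obtain ⟨i, hi⟩ := iso.surjective ⟨0, hF0⟩
      exact ⟨i, by rw [hi]⟩
    obtain ⟨i, hi⟩ := h0mem
    calc v 0 ≤ (iso i : ℝ) := Subtype.coe_le_coe.2 (iso.monotone (by
          simp [Fin.le_def]))
      _ = 0 := hi
  have hsurj : ∀ x ∈ F, ∃ j ≤ m, v j = x := by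
    intro x hx
    refine ⟨(iso.symm ⟨x, hx⟩ : Fin (m+1)).val, Nat.lt_succ_iff.mp (iso.symm ⟨x, hx⟩).isLt, ?_⟩
    have : (⟨min (iso.symm ⟨x, hx⟩ : Fin (m+1)).val m, by omega⟩ : Fin (m+1))
        = iso.symm ⟨x, hx⟩ := by
      apply Fin.ext
      simp only
      exact min_eq_left (Nat.lt_succ_iff.mp (iso.symm ⟨x, hx⟩).isLt)
    rw [hv]
    simp only
    rw [this, OrderIso.apply_symm_apply]
  have hsub : {ω : Ω | ∃ j ≤ k, 0 ≤ ((e j : ℚ):ℝ) ∧ α < W ((e j : ℚ):ℝ) ω - β * ((e j : ℚ):ℝ)}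
      ⊆ {ω : Ω | ∃ j ≤ m, α < W (v j) ω - β * v j} := by
    rintro ω ⟨j, hj, h0, hq⟩
    have hxF : ((e j : ℚ):ℝ) ∈ F := by
      refine Finset.mem_insert_of_mem (Finset.mem_filter.mpr ⟨?_, h0⟩)
      exact Finset.mem_image_of_mem _ (Finset.mem_range.2 (Nat.lt_succ_of_le hj))
    obtain ⟨i, him, hvi⟩ := hsurj _ hxF
    exact ⟨i, him, by rw [hvi]; exact hq⟩
  exact le_trans (measure_mono hsub) (hit_upper hW hα hβ hv0 hv_mono m)

end BMAux

open Real ProbabilityTheory Filter in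
/-- **Brownian motion with drift.** For `α, β > 0`, the probability that `W_t − βt` exceeds
`α` in finite time is exactly `e^{−2αβ}`. -/
theorem brownian_drift_hitting_probability
    {Ω : Type*} [MeasurableSpace Ω] (P : Measure Ω) [IsProbabilityMeasure P]
    (W : ℝ → Ω → ℝ) (hW : IsStdBM P W) (α β : ℝ) (hα : 0 < α) (hβ : 0 < β) :
    P {ω : Ω | ∃ t : ℝ, 0 ≤ t ∧ W t ω - β * t > α} =
      ENNReal.ofReal (Real.exp (-(2 * α * β))) := by
  rw [measure_congr (event_ae_eq hW hα (β := β))]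
  set p : ℝ := (P {ω : Ω | ∃ q : ℚ, 0 ≤ (q:ℝ) ∧ α < W (q:ℝ) ω - β * (q:ℝ)}).toReal with hp
  have hPfin : P {ω : Ω | ∃ q : ℚ, 0 ≤ (q:ℝ) ∧ α < W (q:ℝ) ω - β * (q:ℝ)} ≠ ⊤ :=
    measure_ne_top P _
  have hp0 : 0 ≤ p := ENNReal.toReal_nonneg
  refine le_antisymm (upper_glue hW hα hβ) ?_
  -- lower bound
  have hsub : ∀ n T : ℕ, 0 < n →
      {ω : Ω | ¬∀ j ≤ T*n, W ((j:ℝ)/(n:ℝ)) ω - β * ((j:ℝ)/(n:ℝ)) ≤ α}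
        ⊆ {ω : Ω | ∃ q : ℚ, 0 ≤ (q:ℝ) ∧ α < W (q:ℝ) ω - β * (q:ℝ)} := by
    intro n T hn ω hω
    push_neg at hω
    obtain ⟨j, hj, hgt⟩ := hω
    have hn' : (0:ℝ) < (n:ℝ) := by exact_mod_cast hn
    have hc : (((j:ℚ)/(n:ℚ) : ℚ) : ℝ) = (j:ℝ)/(n:ℝ) := by push_cast; rfl
    exact ⟨(j:ℚ)/(n:ℚ), by rw [hc]; positivity, by rw [hc]; exact hgt⟩
  have hreal : ∀ (n T : ℕ) (ε : ℝ), 0 < n → 0 < T → 0 < ε →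
      (1:ℝ) ≤ (Real.exp (2*β*(α+ε)) * p
        + Real.exp (2*β*(α - β*(T:ℝ)/2))
        + Real.exp (2*β*α) * Real.exp ((((α + β*(T:ℝ)/2)/(T:ℝ))^2 * (T:ℝ) / 2
            - ((α + β*(T:ℝ)/2)/(T:ℝ)) * (α + β*(T:ℝ)/2))))
        + ((T*n : ℕ):ℝ) * (Real.exp (2*β*α)
            * Real.exp ((2*β+ε*(n:ℝ))^2*((1:ℝ)/(n:ℝ))/2 - (ε*(n:ℝ))*ε)) := by
    intro n T ε hn hT hε
    have h := lower_step hW hα hβ n T hn hT hε (fun j => (j:ℝ)/(n:ℝ)) (fun j => rfl)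
    have hPle : P {ω : Ω | ¬∀ j ≤ T*n, W ((j:ℝ)/(n:ℝ)) ω - β * ((j:ℝ)/(n:ℝ)) ≤ α}
        ≤ P {ω : Ω | ∃ q : ℚ, 0 ≤ (q:ℝ) ∧ α < W (q:ℝ) ω - β * (q:ℝ)} :=
      measure_mono (hsub n T hn)
    have h2 : (1:ℝ≥0∞) ≤ ENNReal.ofReal (Real.exp (2*β*(α+ε)))
          * ENNReal.ofReal p
        + ENNReal.ofReal (((T*n : ℕ):ℝ)) * (ENNReal.ofReal (Real.exp (2*β*α))
            * ENNReal.ofReal (Real.exp ((2*β+ε*(n:ℝ))^2*((1:ℝ)/(n:ℝ))/2 - (ε*(n:ℝ))*ε)))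
        + ENNReal.ofReal (Real.exp (2*β*(α - β*(T:ℝ)/2)))
        + ENNReal.ofReal (Real.exp (2*β*α))
            * ENNReal.ofReal (Real.exp ((((α + β*(T:ℝ)/2)/(T:ℝ))^2 * (T:ℝ) / 2
                - ((α + β*(T:ℝ)/2)/(T:ℝ)) * (α + β*(T:ℝ)/2)))) := by
      refine le_trans h ?_
      rw [ENNReal.ofReal_natCast]
      have hPP : P {ω : Ω | ¬∀ j ≤ T*n, W ((j:ℝ)/(n:ℝ)) ω - β * ((j:ℝ)/(n:ℝ)) ≤ α}
          ≤ ENNReal.ofReal p := by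
        rw [hp, ENNReal.ofReal_toReal hPfin]
        exact hPle
      exact add_le_add (add_le_add (add_le_add (mul_le_mul_right hPP _) le_rfl) le_rfl) le_rfl
    rw [← ENNReal.ofReal_mul (Real.exp_nonneg _), ← ENNReal.ofReal_mul (Real.exp_nonneg _),
      ← ENNReal.ofReal_mul (Nat.cast_nonneg _), ← ENNReal.ofReal_mul (Real.exp_nonneg _),
      ← ENNReal.ofReal_add (by positivity) (by positivity),
      ← ENNReal.ofReal_add (by positivity) (by positivity),
      ← ENNReal.ofReal_add (by positivity) (by positivity)] at h2
    have := ENNReal.one_le_ofReal.mp h2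
    linarith
  -- step 1 : kill the n-term
  have hstep1 : ∀ (T : ℕ) (ε : ℝ), 0 < T → 0 < ε →
      (1:ℝ) ≤ Real.exp (2*β*(α+ε)) * p
        + Real.exp (2*β*(α - β*(T:ℝ)/2))
        + Real.exp (2*β*α) * Real.exp ((((α + β*(T:ℝ)/2)/(T:ℝ))^2 * (T:ℝ) / 2
            - ((α + β*(T:ℝ)/2)/(T:ℝ)) * (α + β*(T:ℝ)/2))) := by
    intro T ε hT hε
    have htend : Tendsto (fun n : ℕ => (Real.exp (2*β*(α+ε)) * p
        + Real.exp (2*β*(α - β*(T:ℝ)/2))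
        + Real.exp (2*β*α) * Real.exp ((((α + β*(T:ℝ)/2)/(T:ℝ))^2 * (T:ℝ) / 2
            - ((α + β*(T:ℝ)/2)/(T:ℝ)) * (α + β*(T:ℝ)/2))))
        + ((T*n : ℕ):ℝ) * (Real.exp (2*β*α)
            * Real.exp ((2*β+ε*(n:ℝ))^2*((1:ℝ)/(n:ℝ))/2 - (ε*(n:ℝ))*ε))) atTop
        (nhds ((Real.exp (2*β*(α+ε)) * p
        + Real.exp (2*β*(α - β*(T:ℝ)/2))
        + Real.exp (2*β*α) * Real.exp ((((α + β*(T:ℝ)/2)/(T:ℝ))^2 * (T:ℝ) / 2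
            - ((α + β*(T:ℝ)/2)/(T:ℝ)) * (α + β*(T:ℝ)/2)))) + 0)) :=
      tendsto_const_nhds.add (lim_t2 T β α ε hβ hε)
    rw [add_zero] at htend
    refine ge_of_tendsto htend ?_
    filter_upwards [Filter.eventually_ge_atTop 1] with n hn
    exact hreal n T ε hn hT hε
  -- step 2 : kill the T-terms
  have hstep2 : ∀ ε : ℝ, 0 < ε → (1:ℝ) ≤ Real.exp (2*β*(α+ε)) * p := by
    intro ε hε
    have htend : Tendsto (fun T : ℕ => Real.exp (2*β*(α+ε)) * p
        + (Real.exp (2*β*(α - β*(T:ℝ)/2))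
          + Real.exp (2*β*α) * Real.exp ((((α + β*(T:ℝ)/2)/(T:ℝ))^2 * (T:ℝ) / 2
            - ((α + β*(T:ℝ)/2)/(T:ℝ)) * (α + β*(T:ℝ)/2))))) atTop
        (nhds (Real.exp (2*β*(α+ε)) * p + 0)) :=
      tendsto_const_nhds.add (lim_T α β hα hβ)
    rw [add_zero] at htend
    refine ge_of_tendsto htend ?_
    filter_upwards [Filter.eventually_ge_atTop 1] with T hT
    have := hstep1 T ε hT hε
    linarith
  -- step 3 : ε → 0
  have hstep3 : ∀ ε : ℝ, 0 < ε → Real.exp (-(2*β*(α+ε))) ≤ p := by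
    intro ε hε
    have h := hstep2 ε hε
    have hid : Real.exp (-(2*β*(α+ε))) * Real.exp (2*β*(α+ε)) = 1 := by
      rw [← Real.exp_add]; simp
    calc Real.exp (-(2*β*(α+ε))) = Real.exp (-(2*β*(α+ε))) * 1 := (mul_one _).symm
      _ ≤ Real.exp (-(2*β*(α+ε))) * (Real.exp (2*β*(α+ε)) * p) :=
          mul_le_mul_of_nonneg_left h (Real.exp_nonneg _)
      _ = (Real.exp (-(2*β*(α+ε))) * Real.exp (2*β*(α+ε))) * p := by ring
      _ = p := by rw [hid, one_mul]
  have hfinal : Real.exp (-(2*α*β)) ≤ p := by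
    have hlim := lim_eps α β
    have : Real.exp (-(2*β*α)) ≤ p := by
      refine le_of_tendsto hlim ?_
      refine Filter.Eventually.of_forall fun k => ?_
      exact hstep3 (1/((k:ℝ)+1)) (by positivity)
    rw [show -(2*α*β) = -(2*β*α) by ring]
    exact this
  calc ENNReal.ofReal (Real.exp (-(2*α*β))) ≤ ENNReal.ofReal p :=
        ENNReal.ofReal_le_ofReal hfinal
    _ = P {ω : Ω | ∃ q : ℚ, 0 ≤ (q:ℝ) ∧ α < W (q:ℝ) ω - β * (q:ℝ)} := by
        rw [hp, ENNReal.ofReal_toReal hPfin]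

end
end

section
/- (ℓ² convolution estimate for the SQG multiplier.) Let s ∈ (1/2,1] and σ ∈ (1/s,2), so that σs > 1. There exists a constant C > 0 depending only on s and σ such that for all v, w : ℤ² → ℂ with v(0) = w(0) = 0: ∑_{k ∈ ℤ², k ≠ 0} |∑_{j ∈ ℤ², j ≠ 0, j ≠ k} (((k−j)·j^⊥)/(|k−j|^{σs}|j|^{1+σs})) v(k−j) w(j)|² ≤ C² (∑_{j ≠ 0} |v(j)|²)(∑_{j ≠ 0} |w(j)|²). -/
open scoped ENNReal NNReal
open MeasureTheory

noncomputable section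

/-- Euclidean norm of a lattice point `k ∈ ℤ² ⊆ ℝ²`. -/
def znorm (k : ℤ × ℤ) : ℝ := Real.sqrt ((k.1 : ℝ) ^ 2 + (k.2 : ℝ) ^ 2)

/-- `j^⊥ · k` where `j^⊥ = (−j₂, j₁)`. -/
def perpDot (j k : ℤ × ℤ) : ℝ := (-(j.2 : ℝ)) * (k.1 : ℝ) + (j.1 : ℝ) * (k.2 : ℝ)

/-- Gevrey norm `‖a‖_{ρ,φ} = (∑_{k≠0} |k|^{2ρ} e^{2φ|k|^s} |a k|²)^{1/2}`, valued in `ℝ≥0∞`. -/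
def gnorm (s ρ φ : ℝ) (a : ℤ × ℤ → ℂ) : ℝ≥0∞ :=
  (∑' k : ℤ × ℤ, if k = 0 then 0 else
    ENNReal.ofReal (znorm k ^ (2 * ρ) * Real.exp (2 * φ * znorm k ^ s) * ‖a k‖ ^ 2)) ^ (1/2 : ℝ)

lemma znorm_nonneg (k : ℤ × ℤ) : 0 ≤ znorm k := Real.sqrt_nonneg _

lemma one_le_znorm {k : ℤ × ℤ} (hk : k ≠ 0) : 1 ≤ znorm k := by
  have h : (1:ℝ) ≤ (k.1:ℝ)^2 + (k.2:ℝ)^2 := by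
    have h' : k.1 ≠ 0 ∨ k.2 ≠ 0 := by
      by_contra h; push_neg at h; exact hk (Prod.ext h.1 h.2)
    have : (1:ℤ) ≤ k.1^2 + k.2^2 := by
      rcases h' with h' | h'
      · have := Int.one_le_abs (by simpa using h')
        nlinarith [sq_abs k.1, sq_nonneg k.2]
      · have := Int.one_le_abs (by simpa using h')
        nlinarith [sq_abs k.2, sq_nonneg k.1]
    exact_mod_cast this
  calc (1:ℝ) = Real.sqrt 1 := by simp
  _ ≤ znorm k := Real.sqrt_le_sqrt h

lemma znorm_pos {k : ℤ × ℤ} (hk : k ≠ 0) : 0 < znorm k :=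
  lt_of_lt_of_le one_pos (one_le_znorm hk)

lemma abs_perpDot_le (j u : ℤ × ℤ) : |perpDot j u| ≤ znorm j * znorm u := by
  have key : (perpDot j u)^2 ≤ ((j.1:ℝ)^2 + (j.2:ℝ)^2) * ((u.1:ℝ)^2 + (u.2:ℝ)^2) := by
    unfold perpDot
    nlinarith [sq_nonneg ((j.1:ℝ)*(u.1:ℝ) + (j.2:ℝ)*(u.2:ℝ))]
  calc |perpDot j u| = Real.sqrt ((perpDot j u)^2) := (Real.sqrt_sq_eq_abs _).symm
  _ ≤ Real.sqrt (((j.1:ℝ)^2 + (j.2:ℝ)^2) * ((u.1:ℝ)^2 + (u.2:ℝ)^2)) := Real.sqrt_le_sqrt key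
  _ = znorm j * znorm u := Real.sqrt_mul (by positivity) _

lemma mult_bound {p : ℝ} (hp : 1 ≤ p) {j u : ℤ × ℤ} (hj : j ≠ 0) (hu : u ≠ 0) :
    |perpDot j u / (znorm u ^ p * znorm j ^ (1 + p))| ≤ znorm j ^ (-p) := by
  have ha : 1 ≤ znorm u := one_le_znorm hu
  have hb : 1 ≤ znorm j := one_le_znorm hj
  have ha0 : 0 < znorm u := by linarith
  have hb0 : 0 < znorm j := by linarith
  have hden : 0 < znorm u ^ p * znorm j ^ (1 + p) := by positivity
  rw [abs_div, abs_of_pos hden, div_le_iff₀ hden]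
  have e1 : znorm j ^ (-p) * (znorm u ^ p * znorm j ^ (1 + p))
      = znorm u ^ p * znorm j := by
    rw [mul_left_comm, ← Real.rpow_add hb0]
    norm_num
  rw [e1]
  have h2 : znorm u ≤ znorm u ^ p := by
    calc znorm u = znorm u ^ (1:ℝ) := (Real.rpow_one _).symm
    _ ≤ znorm u ^ p := Real.rpow_le_rpow_of_exponent_le ha hp
  calc |perpDot j u| ≤ znorm j * znorm u := abs_perpDot_le j u
  _ ≤ znorm u ^ p * znorm j := by nlinarith

lemma ennreal_cs (f g : ℤ × ℤ → ℝ≥0∞) :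
    (∑' i, f i * g i) ^ 2 ≤ (∑' i, f i ^ 2) * (∑' i, g i ^ 2) := by
  have h2 : Real.HolderConjugate 2 2 := Real.HolderConjugate.two_two
  have hm : ∀ h : ℤ × ℤ → ℝ≥0∞, AEMeasurable h (Measure.count) :=
    fun h => (measurable_of_countable h).aemeasurable
  have H := ENNReal.lintegral_mul_le_Lp_mul_Lq (Measure.count (α := ℤ × ℤ)) h2 (hm f) (hm g)
  simp_rw [Pi.mul_apply, lintegral_count] at H
  have hsq : ∀ h : ℤ × ℤ → ℝ≥0∞, (∑' i, h i ^ (2:ℝ)) = ∑' i, h i ^ 2 := by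
    intro h; refine tsum_congr fun i => ?_
    rw [show (2:ℝ) = ((2:ℕ):ℝ) by norm_num, ENNReal.rpow_natCast]
  rw [hsq, hsq] at H
  calc (∑' i, f i * g i) ^ 2
      ≤ ((∑' i, f i ^ 2) ^ (1/2:ℝ) * (∑' i, g i ^ 2) ^ (1/2:ℝ)) ^ 2 :=
        pow_le_pow_left₀ (zero_le) H 2
  _ = (∑' i, f i ^ 2) * (∑' i, g i ^ 2) := by
      have hhalf : ∀ X : ℝ≥0∞, (X ^ (1/2:ℝ)) ^ 2 = X := by
        intro X
        rw [← ENNReal.rpow_natCast _ 2, ← ENNReal.rpow_mul]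
        norm_num
      rw [mul_pow, hhalf, hhalf]

lemma znorm_summable {q : ℝ} (hq : 2 < q) :
    Summable (fun j : ℤ × ℤ => if j = 0 then 0 else znorm j ^ (-q)) := by
  have Su := EisensteinSeries.summable_one_div_norm_rpow hq
  set e := finTwoArrowEquiv ℤ with he
  have Su2 : Summable (fun j : ℤ × ℤ => ‖e.symm j‖ ^ (-q)) := e.symm.summable_iff.mpr Su
  apply Su2.of_nonneg_of_le
  · intro j
    by_cases hj : j = 0 <;> simp [hj, Real.rpow_nonneg (znorm_nonneg _)]
  · intro j
    by_cases hj : j = 0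
    · simp [hj, Real.rpow_nonneg (norm_nonneg _)]
    · simp only [hj, if_false]
      have hne : e.symm j ≠ 0 := by
        intro h
        apply hj
        have := congrArg e h
        simp only [Equiv.apply_symm_apply] at this
        rw [this]
        simp [he, finTwoArrowEquiv]
      refine Real.rpow_le_rpow_of_nonpos (norm_pos_iff.mpr hne) ?_ (by linarith)
      rw [pi_norm_le_iff_of_nonneg (znorm_nonneg _)]
      intro i
      have habs : ∀ a b : ℝ, |a| ≤ Real.sqrt (a^2 + b^2) := by
        intro a b
        rw [← Real.sqrt_sq_eq_abs]
        exact Real.sqrt_le_sqrt (by nlinarith [sq_nonneg b])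
      fin_cases i
      · simpa [he, finTwoArrowEquiv, Int.norm_eq_abs, znorm] using habs (j.1:ℝ) (j.2:ℝ)
      · have := habs (j.2:ℝ) (j.1:ℝ)
        rw [add_comm ((j.2:ℝ)^2)] at this
        simpa [he, finTwoArrowEquiv, Int.norm_eq_abs, znorm] using this

/-- **ℓ² convolution estimate for the SQG multiplier.** For `s ∈ (1/2,1]`, `σ ∈ (1/s,2)`
(so `σs > 1`), there is `C > 0` (depending only on `s, σ`) such that for all `v, w : ℤ² → ℂ`
with `v(0) = w(0) = 0`:
`∑_{k≠0} |∑_{j≠0,j≠k} (((k−j)·j^⊥)/(|k−j|^{σs}|j|^{1+σs})) v(k−j) w(j)|²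
  ≤ C² (∑_{j≠0}|v(j)|²)(∑_{j≠0}|w(j)|²)`. -/
theorem sqg_multiplier_convolution_estimate
    (s σ : ℝ) (hs : s ∈ Set.Ioc (1/2 : ℝ) 1) (hσ : σ ∈ Set.Ioo (1/s) 2) :
    ∃ C : ℝ, 0 < C ∧
      ∀ v w : ℤ × ℤ → ℂ, v 0 = 0 → w 0 = 0 →
        (∑' k : ℤ × ℤ, if k = 0 then 0 else
            ENNReal.ofReal
              (‖∑' j : ℤ × ℤ, if j = 0 ∨ j = k then 0 else
                  ((perpDot j (k - j) / (znorm (k - j) ^ (σ * s) * znorm j ^ (1 + σ * s)) : ℝ) : ℂ)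
                    * v (k - j) * w j‖ ^ 2)) ≤
          ENNReal.ofReal (C ^ 2) *
            (∑' j : ℤ × ℤ, if j = 0 then 0 else ENNReal.ofReal (‖v j‖ ^ 2)) *
            ∑' j : ℤ × ℤ, if j = 0 then 0 else ENNReal.ofReal (‖w j‖ ^ 2) := by
  obtain ⟨hs1, hs2⟩ := hs
  obtain ⟨hσ1, hσ2⟩ := hσ
  have hs0 : 0 < s := by linarith
  set p := σ * s with hpdef
  have hp1 : 1 < p := by
    have h := mul_lt_mul_of_pos_right hσ1 hs0
    rwa [one_div, inv_mul_cancel₀ hs0.ne'] at h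
  have hq : 2 < 2 * p := by linarith
  -- the weight sequence
  set A : ℤ × ℤ → ℝ≥0∞ := fun j => if j = 0 then 0 else ENNReal.ofReal (znorm j ^ (-p))
    with hAdef
  set M2 : ℝ≥0∞ := ∑' j, A j ^ 2 with hM2def
  have hM2eq : M2 = ENNReal.ofReal (∑' j : ℤ × ℤ, if j = 0 then 0 else znorm j ^ (-(2*p))) := by
    rw [ENNReal.ofReal_tsum_of_nonneg ?hnn (znorm_summable hq)]
    · refine tsum_congr fun j => ?_
      by_cases hj : j = 0
      · simp [hAdef, hj]
      · simp only [hAdef, hj, if_false]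
        rw [← ENNReal.ofReal_pow (Real.rpow_nonneg (znorm_nonneg _) _)]
        congr 1
        rw [← Real.rpow_natCast (znorm j ^ (-p)) 2, ← Real.rpow_mul (znorm_nonneg _)]
        norm_num
        ring_nf
    case hnn =>
      intro j
      by_cases hj : j = 0 <;> simp [hj, Real.rpow_nonneg (znorm_nonneg _)]
  have hM2fin : M2 ≠ ⊤ := by rw [hM2eq]; exact ENNReal.ofReal_ne_top
  refine ⟨M2.toReal + 1, by positivity, ?_⟩
  have hM2C : M2 ≤ ENNReal.ofReal ((M2.toReal + 1) ^ 2) := by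
    conv_lhs => rw [← ENNReal.ofReal_toReal hM2fin]
    apply ENNReal.ofReal_le_ofReal
    nlinarith [ENNReal.toReal_nonneg (a := M2)]
  intro v w hv hw
  -- per-k estimate
  have key : ∀ k : ℤ × ℤ,
      ENNReal.ofReal
        (‖∑' j : ℤ × ℤ, if j = 0 ∨ j = k then 0 else
            ((perpDot j (k - j) / (znorm (k - j) ^ (σ * s) * znorm j ^ (1 + σ * s)) : ℝ) : ℂ)
              * v (k - j) * w j‖ ^ 2) ≤
        M2 * ∑' j : ℤ × ℤ, ENNReal.ofReal (‖v (k - j)‖ ^ 2) * ENNReal.ofReal (‖w j‖ ^ 2) := by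
    intro k
    set f : ℤ × ℤ → ℂ := fun j => if j = 0 ∨ j = k then 0 else
        ((perpDot j (k - j) / (znorm (k - j) ^ (σ * s) * znorm j ^ (1 + σ * s)) : ℝ) : ℂ)
          * v (k - j) * w j with hfdef
    by_cases hsf : Summable f
    · have hnorm : Summable (fun j => ‖f j‖) := summable_norm_iff.mpr hsf
      have hterm : ∀ j : ℤ × ℤ, ENNReal.ofReal ‖f j‖ ≤
          A j * ENNReal.ofReal (‖v (k - j)‖ * ‖w j‖) := by
        intro j
        by_cases hj : j = 0 ∨ j = k
        · simp [hfdef, hj]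
        · push_neg at hj
          obtain ⟨hj0, hjk⟩ := hj
          have hkj : k - j ≠ 0 := sub_ne_zero.mpr (Ne.symm hjk)
          have hm := mult_bound hp1.le hj0 hkj
          calc ENNReal.ofReal ‖f j‖
              = ENNReal.ofReal
                  (|perpDot j (k - j) / (znorm (k - j) ^ (σ * s) * znorm j ^ (1 + σ * s))|
                    * (‖v (k - j)‖ * ‖w j‖)) := by
                simp only [hfdef, if_neg (not_or.mpr ⟨hj0, hjk⟩)]
                rw [norm_mul, norm_mul, Complex.norm_real, Real.norm_eq_abs, mul_assoc]
          _ ≤ ENNReal.ofReal (znorm j ^ (-p) * (‖v (k - j)‖ * ‖w j‖)) := by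
                apply ENNReal.ofReal_le_ofReal
                exact mul_le_mul_of_nonneg_right hm (by positivity)
          _ = A j * ENNReal.ofReal (‖v (k - j)‖ * ‖w j‖) := by
                rw [ENNReal.ofReal_mul (Real.rpow_nonneg (znorm_nonneg _) _)]
                simp [hAdef, hj0]
      calc ENNReal.ofReal (‖∑' j, f j‖ ^ 2)
          = ENNReal.ofReal ‖∑' j, f j‖ ^ 2 := ENNReal.ofReal_pow (norm_nonneg _) 2
      _ ≤ (∑' j, A j * ENNReal.ofReal (‖v (k - j)‖ * ‖w j‖)) ^ 2 := by
          apply pow_le_pow_left₀ (zero_le)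
          calc ENNReal.ofReal ‖∑' j, f j‖
              ≤ ENNReal.ofReal (∑' j, ‖f j‖) :=
                ENNReal.ofReal_le_ofReal (norm_tsum_le_tsum_norm hnorm)
          _ = ∑' j, ENNReal.ofReal ‖f j‖ :=
                ENNReal.ofReal_tsum_of_nonneg (fun _ => norm_nonneg _) hnorm
          _ ≤ _ := ENNReal.tsum_le_tsum hterm
      _ ≤ (∑' j, A j ^ 2) * ∑' j, ENNReal.ofReal (‖v (k - j)‖ * ‖w j‖) ^ 2 :=
          ennreal_cs _ _
      _ = M2 * ∑' j : ℤ × ℤ, ENNReal.ofReal (‖v (k - j)‖ ^ 2) * ENNReal.ofReal (‖w j‖ ^ 2) := by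
          rw [← hM2def]
          congr 1
          refine tsum_congr fun j => ?_
          rw [ENNReal.ofReal_mul (norm_nonneg _), mul_pow,
            ← ENNReal.ofReal_pow (norm_nonneg _), ← ENNReal.ofReal_pow (norm_nonneg _)]
    · rw [tsum_eq_zero_of_not_summable hsf]
      simp
  -- sum over k
  calc (∑' k : ℤ × ℤ, if k = 0 then 0 else
        ENNReal.ofReal
          (‖∑' j : ℤ × ℤ, if j = 0 ∨ j = k then 0 else
              ((perpDot j (k - j) / (znorm (k - j) ^ (σ * s) * znorm j ^ (1 + σ * s)) : ℝ) : ℂ)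
                * v (k - j) * w j‖ ^ 2))
      ≤ ∑' k : ℤ × ℤ, M2 *
          ∑' j : ℤ × ℤ, ENNReal.ofReal (‖v (k - j)‖ ^ 2) * ENNReal.ofReal (‖w j‖ ^ 2) := by
        refine ENNReal.tsum_le_tsum fun k => ?_
        by_cases hk : k = 0
        · simp [hk]
        · simpa [hk] using key k
  _ = M2 * ((∑' j : ℤ × ℤ, ENNReal.ofReal (‖v j‖ ^ 2)) *
        ∑' j : ℤ × ℤ, ENNReal.ofReal (‖w j‖ ^ 2)) := by
      rw [ENNReal.tsum_mul_left]
      congr 1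
      rw [ENNReal.tsum_comm]
      calc ∑' (j : ℤ × ℤ) (k : ℤ × ℤ),
            ENNReal.ofReal (‖v (k - j)‖ ^ 2) * ENNReal.ofReal (‖w j‖ ^ 2)
          = ∑' j : ℤ × ℤ, (∑' k : ℤ × ℤ, ENNReal.ofReal (‖v (k - j)‖ ^ 2)) *
              ENNReal.ofReal (‖w j‖ ^ 2) := by
            exact tsum_congr fun j => ENNReal.tsum_mul_right
      _ = ∑' j : ℤ × ℤ, (∑' k : ℤ × ℤ, ENNReal.ofReal (‖v k‖ ^ 2)) *
              ENNReal.ofReal (‖w j‖ ^ 2) := by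
            refine tsum_congr fun j => ?_
            congr 1
            exact (Equiv.subRight j).tsum_eq (fun k => ENNReal.ofReal (‖v k‖ ^ 2))
      _ = _ := ENNReal.tsum_mul_left
  _ = M2 * ((∑' j : ℤ × ℤ, if j = 0 then 0 else ENNReal.ofReal (‖v j‖ ^ 2)) *
        ∑' j : ℤ × ℤ, if j = 0 then 0 else ENNReal.ofReal (‖w j‖ ^ 2)) := by
      congr 2
      · refine tsum_congr fun j => ?_
        by_cases hj : j = 0 <;> simp [hj, hv]
      · refine tsum_congr fun j => ?_
        by_cases hj : j = 0 <;> simp [hj, hw]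
  _ ≤ ENNReal.ofReal ((M2.toReal + 1) ^ 2) *
        (∑' j : ℤ × ℤ, if j = 0 then 0 else ENNReal.ofReal (‖v j‖ ^ 2)) *
        ∑' j : ℤ × ℤ, if j = 0 then 0 else ENNReal.ofReal (‖w j‖ ^ 2) := by
      rw [← mul_assoc]
      exact mul_le_mul_left (mul_le_mul_left hM2C _) _

end
end
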